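/- Let S be a nonempty finite set of states, A a set of actions, P : S × A × S → ℝ with P(s'|s,a) ≥ 0 and ∑_{s'∈S} P(s'|s,a) = 1 for all (s,a), R : S × A → ℝ, and γ ∈ [0,1). Let β̂ assign to each state a nonempty finite subset β̂(s) ⊆ A, and define (T_In Q)(s,a) = R(s,a) + γ ∑_{s'} P(s'|s,a) · max_{a'∈β̂(s')} Q(s',a'). Then: (i) there exists a function Q*_In : S × A → ℝ satisfying Q*_In(s,a) = (T_In Q*_In)(s,a) for all (s,a) with a ∈ β̂(s); (ii) any two such functions agree at all (s,a) with a ∈ β̂(s); and (iii) for every Q⁰ : S × A → ℝ, the iterates (T_In)^k Q⁰ converge to Q*_In pointwise on the pairs (s,a) with a ∈ β̂(s) as k → ∞. -/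
import Mathlib


/-- Existence, uniqueness (on the in-sample area), and pointwise convergence of value
iteration to the in-sample optimal value function `Q*_In`, the fixed point of `T_In`. -/
theorem in_sample_operator_fixed_point
    {S A : Type*} [Fintype S] [Nonempty S]
    (P : S → A → S → ℝ) (R : S → A → ℝ) (γ : ℝ)
    (hγ0 : 0 ≤ γ) (hγ1 : γ < 1)
    (hPpos : ∀ s a s', 0 ≤ P s a s') (hPsum : ∀ s a, ∑ s' : S, P s a s' = 1)
    (βhat : S → Finset A) (hβhat : ∀ s, (βhat s).Nonempty)
    (TIn : (S → A → ℝ) → S → A → ℝ)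
    (hTIn : ∀ Q s a, TIn Q s a =
      R s a + γ * ∑ s' : S, P s a s' * (βhat s').sup' (hβhat s') (fun a' => Q s' a')) :
    ∃ QstarIn : S → A → ℝ,
      (∀ s, ∀ a ∈ βhat s, QstarIn s a = TIn QstarIn s a) ∧
      (∀ Q₁ Q₂ : S → A → ℝ,
        (∀ s, ∀ a ∈ βhat s, Q₁ s a = TIn Q₁ s a) →
        (∀ s, ∀ a ∈ βhat s, Q₂ s a = TIn Q₂ s a) →
        ∀ s, ∀ a ∈ βhat s, Q₁ s a = Q₂ s a) ∧
      (∀ Q0 : S → A → ℝ, ∀ s, ∀ a ∈ βhat s,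
        Filter.Tendsto (fun k => TIn^[k] Q0 s a) Filter.atTop (nhds (QstarIn s a))) := by
  classical
  -- the Bellman operator on state-value functions
  set F : (S → ℝ) → (S → ℝ) :=
    fun V s => (βhat s).sup' (hβhat s) (fun a => R s a + γ * ∑ s' : S, P s a s' * V s')
    with hF
  -- basic estimate
  have hsum_est : ∀ (V W : S → ℝ) (s : S) (a : A),
      (R s a + γ * ∑ s' : S, P s a s' * V s') ≤
      (R s a + γ * ∑ s' : S, P s a s' * W s') + γ * dist V W := by
    intro V W s a
    have h1 : ∑ s' : S, P s a s' * V s' ≤ ∑ s' : S, P s a s' * (W s' + dist V W) := by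
      apply Finset.sum_le_sum
      intro s' _
      have hd : V s' ≤ W s' + dist V W := by
        have h := dist_le_pi_dist V W s'
        rw [Real.dist_eq] at h
        have := (abs_le.mp h).2
        linarith
      exact mul_le_mul_of_nonneg_left hd (hPpos s a s')
    have h2 : ∑ s' : S, P s a s' * (W s' + dist V W) =
        (∑ s' : S, P s a s' * W s') + dist V W := by
      simp only [mul_add, Finset.sum_add_distrib, ← Finset.sum_mul, hPsum s a, one_mul]
    have := mul_le_mul_of_nonneg_left (h1.trans_eq h2) hγ0
    nlinarith
  -- F is a contraction with ratio γ
  have hFdist : ∀ V W : S → ℝ, ∀ s : S, dist (F V s) (F W s) ≤ γ * dist V W := by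
    intro V W s
    rw [Real.dist_eq, abs_sub_le_iff]
    constructor
    · have : F V s ≤ F W s + γ * dist V W := by
        apply Finset.sup'_le
        intro a ha
        exact (hsum_est V W s a).trans (by
          have := Finset.le_sup' (fun a => R s a + γ * ∑ s' : S, P s a s' * W s') ha
          linarith)
      linarith
    · have : F W s ≤ F V s + γ * dist V W := by
        apply Finset.sup'_le
        intro a ha
        have h := hsum_est W V s a
        rw [dist_comm] at h
        exact h.trans (by
          have := Finset.le_sup' (fun a => R s a + γ * ∑ s' : S, P s a s' * V s') ha
          linarith)
      linarith
  have hFcontr : ContractingWith γ.toNNReal F := by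
    constructor
    · exact_mod_cast (by simpa [Real.toNNReal_lt_one] using hγ1 : γ.toNNReal < 1)
    · apply LipschitzWith.of_dist_le_mul
      intro V W
      rw [dist_pi_le_iff (by positivity)]
      intro s
      calc dist (F V s) (F W s) ≤ γ * dist V W := hFdist V W s
        _ = γ.toNNReal * dist V W := by rw [Real.coe_toNNReal γ hγ0]
  -- the fixed point of F
  set Vstar : S → ℝ := ContractingWith.fixedPoint F hFcontr with hVstar
  have hVfix : F Vstar = Vstar := hFcontr.fixedPoint_isFixedPt
  -- candidate Q*
  refine ⟨fun s a => R s a + γ * ∑ s' : S, P s a s' * Vstar s', ?_, ?_, ?_⟩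
  · -- fixed point property
    intro s a _
    rw [hTIn]
    have hs := congrFun hVfix
    simp only [hF] at hs
    simp only [hs]
  · -- uniqueness
    intro Q₁ Q₂ h₁ h₂ s a ha
    have key : ∀ Q : S → A → ℝ, (∀ s, ∀ a ∈ βhat s, Q s a = TIn Q s a) →
        ∀ s, ∀ a ∈ βhat s, Q s a = R s a + γ * ∑ s' : S, P s a s' * Vstar s' := by
      intro Q hQ
      set vQ : S → ℝ := fun s => (βhat s).sup' (hβhat s) (fun a => Q s a) with hvQ
      have hvfix : Function.IsFixedPt F vQ := by
        funext s
        rw [hF]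
        simp only
        rw [show (βhat s).sup' (hβhat s) (fun a => R s a + γ * ∑ s' : S, P s a s' * vQ s')
            = (βhat s).sup' (hβhat s) (fun a => Q s a) from ?_]
        apply Finset.sup'_congr _ rfl
        intro a ha
        rw [hQ s a ha, hTIn]
      have hvQ_eq : vQ = Vstar := hFcontr.fixedPoint_unique hvfix
      intro s a ha
      rw [hQ s a ha, hTIn, ← hvQ_eq]
    rw [key Q₁ h₁ s a ha, key Q₂ h₂ s a ha]
  · -- convergence
    intro Q0 s a _
    set v0 : S → ℝ := fun s => (βhat s).sup' (hβhat s) (fun a => Q0 s a) with hv0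
    -- values of iterates
    have hviter : ∀ k : ℕ, (fun s => (βhat s).sup' (hβhat s) (fun a => TIn^[k] Q0 s a))
        = F^[k] v0 := by
      intro k
      induction k with
      | zero => simp [hv0]
      | succ k ih =>
        rw [Function.iterate_succ_apply', Function.iterate_succ_apply', ← ih]
        funext s
        rw [hF]
        simp only
        apply Finset.sup'_congr _ rfl
        intro a ha
        rw [hTIn]
    have hiter : ∀ k : ℕ, TIn^[k + 1] Q0 s a =
        R s a + γ * ∑ s' : S, P s a s' * (F^[k] v0) s' := by
      intro k
      rw [Function.iterate_succ_apply', hTIn, ← hviter k]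
    -- F^[k] v0 → Vstar pointwise
    have htend : Filter.Tendsto (fun k => F^[k] v0) Filter.atTop (nhds Vstar) :=
      hFcontr.tendsto_iterate_fixedPoint v0
    have htendpt : ∀ s' : S, Filter.Tendsto (fun k => (F^[k] v0) s') Filter.atTop
        (nhds (Vstar s')) := tendsto_pi_nhds.mp htend
    have : Filter.Tendsto (fun k => TIn^[k + 1] Q0 s a) Filter.atTop
        (nhds (R s a + γ * ∑ s' : S, P s a s' * Vstar s')) := by
      simp only [hiter]
      apply Filter.Tendsto.const_add
      apply Filter.Tendsto.const_mul
      apply tendsto_finset_sum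
      intro s' _
      exact (htendpt s').const_mul _
    exact (Filter.tendsto_add_atTop_iff_nat 1).mp this
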